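/- Let Q ⊆ ℝⁿ be a convex set with ‖x − y‖ ≤ D for all x, y ∈ Q, where D > 0. Let g : Q → ℝⁿ, let z_0 ∈ Q, L_0 > 0, and suppose the sequences (z_k) ⊆ Q, (w_k) ⊆ Q, (L_k) ⊆ (0,∞) satisfy for every k ≥ 0: w_k is a minimizer over Q of x ↦ ⟨g(z_k), x − z_k⟩ + (L_k/2)‖z_k − x‖²; z_{k+1} is a minimizer over Q of x ↦ ⟨g(w_k), x − w_k⟩ + (L_k/2)‖z_k − x‖²; and L_{k+1} = L_k + max{0, (2⟨g(w_k), w_k − z_{k+1}⟩ − L_k‖z_k − z_{k+1}‖²)/(D² + ‖z_k − z_{k+1}‖²)}. Then for every k ≥ 0 and every y ∈ Q: Σ_{i=0}^{k} ⟨g(w_i), w_i − y⟩ ≤ 2D²(L_{k+1} − L_0) + (L_0/2)‖z_0 − y‖². -/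

import Mathlib

open scoped RealInnerProductSpace
open Finset

lemma strong_min {E : Type*} [NormedAddCommGroup E] [InnerProductSpace ℝ E]
    (Q : Set E) (hQ : Convex ℝ Q) (a c b m : E) (L : ℝ) (hL : 0 < L)
    (hm : m ∈ Q)
    (hmin : ∀ x ∈ Q, ⟪a, m - b⟫ + L / 2 * ‖c - m‖ ^ 2 ≤ ⟪a, x - b⟫ + L / 2 * ‖c - x‖ ^ 2) :
    ∀ y ∈ Q, ⟪a, m - b⟫ + L / 2 * ‖c - m‖ ^ 2 + L / 2 * ‖m - y‖ ^ 2 ≤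
      ⟪a, y - b⟫ + L / 2 * ‖c - y‖ ^ 2 := by
  intro y hy
  set v := y - m with hv
  set u := c - m with hu
  have key : ∀ t : ℝ, 0 < t → t ≤ 1 →
      0 ≤ (⟪a, v⟫ - L * ⟪u, v⟫) + t * (L / 2 * ‖v‖ ^ 2) := by
    intro t ht ht1
    have hx : m + t • v ∈ Q := by
      have h2 := hQ hm hy (by linarith : (0:ℝ) ≤ 1 - t) ht.le (by ring)
      have e : (1 - t) • m + t • y = m + t • v := by rw [hv]; module
      rwa [e] at h2
    have h := hmin _ hx
    have e1 : m + t • v - b = (m - b) + t • v := by abel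
    have e2 : c - (m + t • v) = u - t • v := by rw [hu]; abel
    rw [e1, e2, inner_add_right, real_inner_smul_right] at h
    have e3 : ‖u - t • v‖ ^ 2 = ‖u‖ ^ 2 - 2 * (t * ⟪u, v⟫) + t ^ 2 * ‖v‖ ^ 2 := by
      rw [norm_sub_sq_real, real_inner_smul_right, norm_smul]
      simp [mul_pow]
    rw [e3] at h
    nlinarith [h, ht, hL]
  have halpha : 0 ≤ ⟪a, v⟫ - L * ⟪u, v⟫ := by
    by_contra hneg
    push_neg at hneg
    set α := ⟪a, v⟫ - L * ⟪u, v⟫ with hα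
    set β := L / 2 * ‖v‖ ^ 2 with hβ
    have hβ0 : 0 ≤ β := by positivity
    have hden : (0:ℝ) < 2 * (β + 1) := by linarith
    have htpos : 0 < min 1 (-α / (2 * (β + 1))) :=
      lt_min one_pos (div_pos (by linarith) hden)
    have ht1 : min 1 (-α / (2 * (β + 1))) ≤ 1 := min_le_left _ _
    have ht2 : min 1 (-α / (2 * (β + 1))) ≤ -α / (2 * (β + 1)) := min_le_right _ _
    have ht3 : min 1 (-α / (2 * (β + 1))) * (2 * (β + 1)) ≤ -α :=
      (le_div_iff₀ hden).mp ht2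
    have hk := key _ htpos ht1
    nlinarith [mul_pos htpos (by linarith : (0:ℝ) < β + 2), hk, ht3,
      mul_nonneg htpos.le hβ0]
  have e4 : ‖c - y‖ ^ 2 = ‖u‖ ^ 2 - 2 * ⟪u, v⟫ + ‖v‖ ^ 2 := by
    have e : c - y = u - v := by rw [hu, hv]; abel
    rw [e, norm_sub_sq_real]
  have e5 : ⟪a, y - b⟫ = ⟪a, m - b⟫ + ⟪a, v⟫ := by
    have e : y - b = (m - b) + v := by rw [hv]; abel
    rw [e, inner_add_right]
  have e6 : ‖m - y‖ ^ 2 = ‖v‖ ^ 2 := by rw [hv, norm_sub_rev]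
  rw [e4, e5, e6]
  nlinarith [halpha]

/-- telescoped descent inequality of the UMP method (deterministic setting). -/
theorem ump_telescoped_inequality {n : ℕ} (Q : Set (EuclideanSpace ℝ (Fin n)))
    (hQ : Convex ℝ Q)
    (D : ℝ) (hD : 0 < D) (hQD : ∀ x ∈ Q, ∀ y ∈ Q, ‖x - y‖ ≤ D)
    (g : EuclideanSpace ℝ (Fin n) → EuclideanSpace ℝ (Fin n))
    (z w : ℕ → EuclideanSpace ℝ (Fin n)) (L : ℕ → ℝ)
    (hzQ : ∀ k, z k ∈ Q) (hwQ : ∀ k, w k ∈ Q) (hLpos : ∀ k, 0 < L k)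
    (hw : ∀ k, ∀ x ∈ Q, ⟪g (z k), w k - z k⟫ + L k / 2 * ‖z k - w k‖ ^ 2 ≤
      ⟪g (z k), x - z k⟫ + L k / 2 * ‖z k - x‖ ^ 2)
    (hz : ∀ k, ∀ x ∈ Q, ⟪g (w k), z (k + 1) - w k⟫ + L k / 2 * ‖z k - z (k + 1)‖ ^ 2 ≤
      ⟪g (w k), x - w k⟫ + L k / 2 * ‖z k - x‖ ^ 2)
    (hLrec : ∀ k, L (k + 1) = L k + max 0
      ((2 * ⟪g (w k), w k - z (k + 1)⟫ - L k * ‖z k - z (k + 1)‖ ^ 2) /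
        (D ^ 2 + ‖z k - z (k + 1)‖ ^ 2))) :
    ∀ k : ℕ, ∀ y ∈ Q,
      ∑ i ∈ range (k + 1), ⟪g (w i), w i - y⟫ ≤
        2 * D ^ 2 * (L (k + 1) - L 0) + L 0 / 2 * ‖z 0 - y‖ ^ 2 := by
  have hLmono : ∀ k, L k ≤ L (k + 1) := by
    intro k
    rw [hLrec k]
    have := le_max_left 0 ((2 * ⟪g (w k), w k - z (k + 1)⟫ - L k * ‖z k - z (k + 1)‖ ^ 2) /
        (D ^ 2 + ‖z k - z (k + 1)‖ ^ 2))
    linarith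
  have hL0 : ∀ k, L 0 ≤ L k := by
    intro k
    induction k with
    | zero => exact le_refl _
    | succ k ih => exact ih.trans (hLmono k)
  intro k y hy
  -- per-step inequality
  have step : ∀ k, ⟪g (w k), w k - y⟫ ≤ D ^ 2 * (L (k + 1) - L k)
      + L k / 2 * ‖z k - y‖ ^ 2 - L k / 2 * ‖z (k + 1) - y‖ ^ 2 := by
    intro k
    set s := ‖z k - z (k + 1)‖ ^ 2 with hs
    have hs0 : 0 ≤ s := by positivity
    have hsD : s ≤ D ^ 2 := by
      have h1 := hQD (z k) (hzQ k) (z (k + 1)) (hzQ (k + 1))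
      have h2 : (0:ℝ) ≤ ‖z k - z (k + 1)‖ := norm_nonneg _
      nlinarith
    have hΔ : 0 ≤ L (k + 1) - L k := by linarith [hLmono k]
    -- bound on ⟪g wk, wk - z(k+1)⟫
    have hmaxle : (2 * ⟪g (w k), w k - z (k + 1)⟫ - L k * s) / (D ^ 2 + s)
        ≤ L (k + 1) - L k := by
      have e : L (k + 1) - L k = max 0 ((2 * ⟪g (w k), w k - z (k + 1)⟫ - L k * s) /
          (D ^ 2 + s)) := by rw [hLrec k]; ring
      rw [e]
      exact le_max_right _ _
    have hden : (0:ℝ) < D ^ 2 + s := by positivity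
    have hA : 2 * ⟪g (w k), w k - z (k + 1)⟫ - L k * s ≤ (L (k + 1) - L k) * (D ^ 2 + s) :=
      (div_le_iff₀ hden).mp hmaxle
    have hA2 : ⟪g (w k), w k - z (k + 1)⟫ ≤ D ^ 2 * (L (k + 1) - L k) + L k / 2 * s := by
      nlinarith [mul_le_mul_of_nonneg_left hsD hΔ]
    -- strong minimizer property of z (k+1)
    have hBC := strong_min Q hQ (g (w k)) (z k) (w k) (z (k + 1)) (L k) (hLpos k)
      (hzQ (k + 1)) (hz k) y hy
    have esplit : ⟪g (w k), w k - y⟫ = ⟪g (w k), w k - z (k + 1)⟫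
        + ⟪g (w k), z (k + 1) - w k⟫ - ⟪g (w k), y - w k⟫ := by
      rw [← inner_add_right, ← inner_sub_right]
      congr 1
      abel
    rw [← hs] at hBC
    rw [esplit]
    linarith
  -- strengthened induction
  have main : ∀ k, ∑ i ∈ range (k + 1), ⟪g (w i), w i - y⟫ ≤
      D ^ 2 * (L (k + 1) - L 0) + D ^ 2 / 2 * (L k - L 0)
      + L 0 / 2 * ‖z 0 - y‖ ^ 2 - L k / 2 * ‖z (k + 1) - y‖ ^ 2 := by
    intro k
    induction k with
    | zero =>
      have h0 := step 0
      simp only [zero_add] at h0 ⊢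
      rw [sum_range_one]
      linarith
    | succ k ih =>
      rw [sum_range_succ]
      have h1 := step (k + 1)
      have h2 : (L (k + 1) - L k) / 2 * ‖z (k + 1) - y‖ ^ 2
          ≤ (L (k + 1) - L k) / 2 * D ^ 2 := by
        have hzy := hQD (z (k + 1)) (hzQ (k + 1)) y hy
        have hΔ : 0 ≤ L (k + 1) - L k := by linarith [hLmono k]
        have : ‖z (k + 1) - y‖ ^ 2 ≤ D ^ 2 := by
          nlinarith [norm_nonneg (z (k + 1) - y)]
        nlinarith
      linarith
  have hm := main k
  have h1 := hLmono k
  have h2 := hL0 k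
  have h3 : 0 ≤ ‖z (k + 1) - y‖ ^ 2 := by positivity
  have h4 := (hLpos k).le
  nlinarith
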